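/- If a connected graph G on n vertices satisfies γ_{R2}(G) = n−2, then Δ(G) ≤ 3. -/

import Mathlib

open Finset Classical in
/-- The Roman `{2}`-domination number of a finite graph: the minimum weight of a
function `f : V → {0,1,2}` such that every vertex `v` with `f v = 0` satisfies
`∑_{u ∈ N(v)} f u ≥ 2`. -/
noncomputable def roman2 {V : Type*} [Fintype V] (G : SimpleGraph V) : ℕ :=
  sInf {w | ∃ f : V → ℕ, (∀ v, f v ≤ 2) ∧
    (∀ v, f v = 0 → 2 ≤ ∑ u ∈ Finset.univ.filter (fun u => G.Adj v u), f u) ∧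
    w = ∑ v, f v}

open Finset Classical in
/-- The domination number. -/
noncomputable def domNum {V : Type*} [Fintype V] (G : SimpleGraph V) : ℕ :=
  sInf {k | ∃ S : Finset V, S.card = k ∧ ∀ v, v ∉ S → ∃ u ∈ S, G.Adj u v}

open Finset Classical in
/-- The 2-domination number. -/
noncomputable def twoDomNum {V : Type*} [Fintype V] (G : SimpleGraph V) : ℕ :=
  sInf {k | ∃ S : Finset V, S.card = k ∧
    ∀ v, v ∉ S → 2 ≤ (S.filter (fun u => G.Adj u v)).card}

theorem maxDegree_le_three_of_roman2 {V : Type*} [Fintype V] (G : SimpleGraph V)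
    [DecidableRel G.Adj] (hconn : G.Connected)
    (h : roman2 G + 2 = Fintype.card V) :
    G.maxDegree ≤ 3 := by
  classical
  apply SimpleGraph.maxDegree_le_of_forall_degree_le
  intro v
  set d := G.degree v with hd
  -- the function: 2 at v, 0 on neighbors of v, 1 elsewhere
  set f : V → ℕ := fun u => if u = v then 2 else if G.Adj v u then 0 else 1 with hf
  have h1 : ∀ u, f u ≤ 2 := by
    intro u; simp only [hf]; split_ifs <;> omega
  have h2 : ∀ u, f u = 0 →
      2 ≤ ∑ w ∈ Finset.univ.filter (fun w => G.Adj u w), f w := by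
    intro u hu
    by_cases h1' : u = v
    · simp [hf, h1'] at hu
    by_cases h2' : G.Adj v u
    · have hv : v ∈ Finset.univ.filter (fun w => G.Adj u w) := by
        simp [h2'.symm]
      calc 2 = f v := by simp [hf]
      _ ≤ _ := Finset.single_le_sum (fun i _ => Nat.zero_le _) hv
    · simp [hf, h1', h2'] at hu
  have hmem : (∑ u, f u) ∈ {w | ∃ f : V → ℕ, (∀ v, f v ≤ 2) ∧
      (∀ v, f v = 0 → 2 ≤ ∑ u ∈ Finset.univ.filter (fun u => G.Adj v u), f u) ∧
      w = ∑ v, f v} := ⟨f, h1, h2, rfl⟩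
  have hle : roman2 G ≤ ∑ u, f u := by
    apply Nat.sInf_le
    refine ⟨f, h1, fun w hw => ?_, rfl⟩
    have := h2 w hw
    convert this using 2
    congr!
  -- key counting identity: (∑ f) + d = card V + 1
  have hkey : (∑ u, f u) + d = Fintype.card V + 1 := by
    have heq : ∑ u, (f u + if G.Adj v u then 1 else 0)
        = ∑ u : V, (if u = v then 2 else 1) := by
      apply Finset.sum_congr rfl
      intro u _
      simp only [hf]
      split_ifs with h1' h2'
      · exact absurd (h1' ▸ h2') (G.loopless.irrefl v)
      · rfl
      · rfl
      · rfl
    rw [Finset.sum_add_distrib] at heq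
    have hdeg : (∑ u : V, if G.Adj v u then 1 else 0) = d := by
      simp only [Finset.sum_boole, Nat.cast_id]
      rw [hd, SimpleGraph.degree]
      congr 1
      ext u
      simp
    have hrhs : ∑ u : V, (if u = v then 2 else 1) = Fintype.card V + 1 := by
      have : ∀ u : V, (if u = v then 2 else 1) = 1 + (if u = v then 1 else 0) := by
        intro u; split_ifs <;> rfl
      simp only [this, Finset.sum_add_distrib, Finset.sum_ite_eq, Finset.sum_ite_eq',
        Finset.sum_const, smul_eq_mul, mul_one, Finset.mem_univ, if_true,
        Finset.card_univ]
    omega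
  omega
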